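/- Let K ≥ 2 be even, let X be uniformly distributed on the set {x ∈ {0,1}^K : Σ_i x_i = K/2}, and let Y be any {0,1}^K-valued random variable on the same probability space. Suppose δ ∈ [0, 1/2] satisfies (1/K)·Σ_{i=1}^K P(X_i ≠ Y_i) ≤ δ. Then the mutual information (in nats) satisfies I[X ; Y] ≥ K·(log 2 − h(δ)) − (1/2)·log(2K), where h is the binary entropy function in nats. -/

import Mathlib

open MeasureTheory Real Finset

/-- Shannon entropy (in nats) of a finite-valued random variable `X` under the
probability measure `μ`. -/
noncomputable def shannonEntropy {Ω : Type*} [MeasurableSpace Ω] {α : Type*} [Fintype α]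
    (μ : Measure Ω) (X : Ω → α) : ℝ :=
  ∑ x : α, Real.negMulLog ((μ (X ⁻¹' {x})).toReal)

/-- Shannon mutual information (in nats): `I[X ; Y] := H[X] + H[Y] − H[(X, Y)]`. -/
noncomputable def mutualInfo {Ω : Type*} [MeasurableSpace Ω]
    {α β : Type*} [Fintype α] [Fintype β]
    (μ : Measure Ω) (X : Ω → α) (Y : Ω → β) : ℝ :=
  shannonEntropy μ X + shannonEntropy μ Y - shannonEntropy μ (fun ω => (X ω, Y ω))

set_option linter.unusedSectionVars false

section Aux

variable {Ω : Type*} [MeasurableSpace Ω] {μ : Measure Ω} [IsProbabilityMeasure μ]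

lemma prob_toReal_le_one {s : Set Ω} : (μ s).toReal ≤ 1 := by
  calc (μ s).toReal ≤ (1 : ENNReal).toReal :=
        ENNReal.toReal_mono ENNReal.one_ne_top prob_le_one
  _ = 1 := by simp

lemma sum_prob_eq_one {α : Type*} [Fintype α] [MeasurableSpace α] [MeasurableSingletonClass α]
    {X : Ω → α} (hX : Measurable X) :
    ∑ a : α, (μ (X ⁻¹' {a})).toReal = 1 := by
  classical
  have h : ∑ a : α, μ (X ⁻¹' {a}) = μ (X ⁻¹' ↑(univ : Finset α)) :=
    sum_measure_preimage_singleton _ (fun a _ => hX (measurableSet_singleton a))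
  rw [show (↑(univ : Finset α) : Set α) = Set.univ by simp, Set.preimage_univ,
    measure_univ] at h
  rw [← ENNReal.toReal_sum (fun a _ => measure_ne_top μ _), h, ENNReal.toReal_one]

lemma shannonEntropy_comp_inj {α β : Type*} [Fintype α] [Fintype β]
    (μ : Measure Ω) {f : α → β} (hf : Function.Injective f) (X : Ω → α) :
    shannonEntropy μ (fun ω => f (X ω)) = shannonEntropy μ X := by
  classical
  unfold shannonEntropy
  rw [← Finset.sum_subset (Finset.subset_univ ((univ : Finset α).image f))]
  · rw [Finset.sum_image (fun a _ b _ h => hf h)]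
    refine Finset.sum_congr rfl fun a _ => ?_
    have h2 : (fun ω => f (X ω)) ⁻¹' {f a} = X ⁻¹' {a} := by
      ext ω; simp [hf.eq_iff]
    rw [h2]
  · intro b _ hb
    have h2 : (fun ω => f (X ω)) ⁻¹' {b} = ∅ := by
      ext ω
      simp only [Set.mem_preimage, Set.mem_singleton_iff, Set.mem_empty_iff_false, iff_false]
      intro h
      exact hb (Finset.mem_image.2 ⟨X ω, Finset.mem_univ _, h⟩)
    simp [h2]


lemma shannonEntropy_pair_le {α β : Type*} [Fintype α] [Fintype β]
    [MeasurableSpace α] [MeasurableSingletonClass α]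
    [MeasurableSpace β] [MeasurableSingletonClass β]
    {X : Ω → α} {Y : Ω → β} (hX : Measurable X) (hY : Measurable Y) :
    shannonEntropy μ (fun ω => (X ω, Y ω)) ≤ shannonEntropy μ X + shannonEntropy μ Y := by
  classical
  set p : α → ℝ := fun a => (μ (X ⁻¹' {a})).toReal with hp
  set q : β → ℝ := fun b => (μ (Y ⁻¹' {b})).toReal with hq
  set r : α × β → ℝ := fun c => (μ ((fun ω => (X ω, Y ω)) ⁻¹' {c})).toReal with hr
  have hpair : Measurable (fun ω => (X ω, Y ω)) := hX.prodMk hY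
  have hp1 : ∑ a, p a = 1 := sum_prob_eq_one hX
  have hq1 : ∑ b, q b = 1 := sum_prob_eq_one hY
  have hr1 : ∑ c, r c = 1 := sum_prob_eq_one hpair
  have hrnn : ∀ c, 0 ≤ r c := fun c => ENNReal.toReal_nonneg
  have hsub : ∀ a b, ((fun ω => (X ω, Y ω)) ⁻¹' {(a, b)}) ⊆ X ⁻¹' {a} := by
    intro a b ω h
    simp only [Set.mem_preimage, Set.mem_singleton_iff, Prod.mk.injEq] at h ⊢
    exact h.1
  have hsub' : ∀ a b, ((fun ω => (X ω, Y ω)) ⁻¹' {(a, b)}) ⊆ Y ⁻¹' {b} := by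
    intro a b ω h
    simp only [Set.mem_preimage, Set.mem_singleton_iff, Prod.mk.injEq] at h ⊢
    exact h.2
  have hrp : ∀ a b, r (a, b) ≤ p a := fun a b =>
    ENNReal.toReal_mono (measure_ne_top μ _) (measure_mono (hsub a b))
  have hrq : ∀ a b, r (a, b) ≤ q b := fun a b =>
    ENNReal.toReal_mono (measure_ne_top μ _) (measure_mono (hsub' a b))
  have hmargX : ∀ a, ∑ b, r (a, b) = p a := by
    intro a
    have h : ∑ c ∈ ({a} ×ˢ (univ : Finset β)), μ ((fun ω => (X ω, Y ω)) ⁻¹' {c})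
        = μ ((fun ω => (X ω, Y ω)) ⁻¹' ↑(({a} ×ˢ (univ : Finset β)))) :=
      sum_measure_preimage_singleton _ (fun c _ => hpair (measurableSet_singleton c))
    have h2 : ((fun ω => (X ω, Y ω)) ⁻¹' ↑(({a} : Finset α) ×ˢ (univ : Finset β)))
        = X ⁻¹' {a} := by
      ext ω; simp [eq_comm]
    rw [h2] at h
    have h3 : ∑ b, r (a, b) = (∑ c ∈ ({a} ×ˢ (univ : Finset β)),
        μ ((fun ω => (X ω, Y ω)) ⁻¹' {c})).toReal := by
      rw [ENNReal.toReal_sum (fun c _ => measure_ne_top μ _)]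
      rw [Finset.sum_product, Finset.sum_singleton]
    rw [h3, h]
  have hmargY : ∀ b, ∑ a, r (a, b) = q b := by
    intro b
    have h : ∑ c ∈ ((univ : Finset α) ×ˢ ({b} : Finset β)), μ ((fun ω => (X ω, Y ω)) ⁻¹' {c})
        = μ ((fun ω => (X ω, Y ω)) ⁻¹' ↑(((univ : Finset α) ×ˢ ({b} : Finset β)))) :=
      sum_measure_preimage_singleton _ (fun c _ => hpair (measurableSet_singleton c))
    have h2 : ((fun ω => (X ω, Y ω)) ⁻¹' ↑((univ : Finset α) ×ˢ ({b} : Finset β)))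
        = Y ⁻¹' {b} := by
      ext ω; simp [eq_comm]
    rw [h2] at h
    have h3 : ∑ a, r (a, b) = (∑ c ∈ ((univ : Finset α) ×ˢ ({b} : Finset β)),
        μ ((fun ω => (X ω, Y ω)) ⁻¹' {c})).toReal := by
      rw [ENNReal.toReal_sum (fun c _ => measure_ne_top μ _)]
      rw [Finset.sum_product_right, Finset.sum_singleton]
    rw [h3, h]
  -- rewrite entropies
  have hHX : shannonEntropy μ X = ∑ a, ∑ b, -(r (a, b) * Real.log (p a)) := by
    unfold shannonEntropy
    refine Finset.sum_congr rfl fun a _ => ?_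
    rw [show Real.negMulLog (p a) = -(∑ b, r (a, b)) * Real.log (p a) by
      rw [hmargX a]; simp [Real.negMulLog]]
    rw [neg_mul, Finset.sum_mul, ← Finset.sum_neg_distrib]
  have hHY : shannonEntropy μ Y = ∑ a, ∑ b, -(r (a, b) * Real.log (q b)) := by
    unfold shannonEntropy
    rw [Finset.sum_comm]
    refine Finset.sum_congr rfl fun b _ => ?_
    rw [show Real.negMulLog (q b) = -(∑ a, r (a, b)) * Real.log (q b) by
      rw [hmargY b]; simp [Real.negMulLog]]
    rw [neg_mul, Finset.sum_mul, ← Finset.sum_neg_distrib]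
  have hHP : shannonEntropy μ (fun ω => (X ω, Y ω)) = ∑ a, ∑ b, -(r (a, b) * Real.log (r (a, b))) := by
    unfold shannonEntropy
    rw [Fintype.sum_prod_type]
    refine Finset.sum_congr rfl fun a _ => Finset.sum_congr rfl fun b _ => ?_
    simp [Real.negMulLog, hr, neg_mul]
  -- Gibbs term inequality
  have key : ∀ a b, r (a, b) - p a * q b ≤
      r (a, b) * Real.log (r (a, b)) - r (a, b) * Real.log (p a) - r (a, b) * Real.log (q b) := by
    intro a b
    rcases eq_or_lt_of_le (hrnn (a, b)) with h0 | hpos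
    · rw [← h0]
      have : 0 ≤ p a * q b := mul_nonneg ENNReal.toReal_nonneg ENNReal.toReal_nonneg
      simp; linarith
    · have hpa : 0 < p a := lt_of_lt_of_le hpos (hrp a b)
      have hqb : 0 < q b := lt_of_lt_of_le hpos (hrq a b)
      have hlog := Real.log_le_sub_one_of_pos
        (show 0 < p a * q b / r (a, b) by positivity)
      rw [Real.log_div (by positivity) (ne_of_gt hpos), Real.log_mul hpa.ne' hqb.ne'] at hlog
      have h2 := mul_le_mul_of_nonneg_left hlog hpos.le
      have h3 : r (a, b) * (p a * q b / r (a, b) - 1) = p a * q b - r (a, b) := by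
        field_simp
      rw [h3] at h2
      nlinarith [h2]
  have hsum : ∑ a, ∑ b, (r (a, b) - p a * q b) ≤
      ∑ a, ∑ b, (r (a, b) * Real.log (r (a, b)) - r (a, b) * Real.log (p a)
        - r (a, b) * Real.log (q b)) :=
    Finset.sum_le_sum fun a _ => Finset.sum_le_sum fun b _ => key a b
  have hL : ∑ a, ∑ b, (r (a, b) - p a * q b) = 0 := by
    have h1 : ∑ a, ∑ b, r (a, b) = 1 := by
      rw [← hr1, ← Fintype.sum_prod_type]
    have h2 : ∑ a : α, ∑ b : β, p a * q b = 1 := by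
      rw [← Finset.sum_mul_sum, hp1, hq1, one_mul]
    simp only [Finset.sum_sub_distrib, h1, h2, sub_self]
  rw [hHX, hHY, hHP]
  have hR : ∑ a, ∑ b, (r (a, b) * Real.log (r (a, b)) - r (a, b) * Real.log (p a)
        - r (a, b) * Real.log (q b)) =
      (∑ a, ∑ b, -(r (a, b) * Real.log (p a))) + (∑ a, ∑ b, -(r (a, b) * Real.log (q b)))
        - (∑ a, ∑ b, -(r (a, b) * Real.log (r (a, b)))) := by
    simp only [← Finset.sum_add_distrib, ← Finset.sum_sub_distrib]
    refine Finset.sum_congr rfl fun a _ => Finset.sum_congr rfl fun b _ => by ring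
  linarith [hL ▸ hsum, hR]

lemma shannonEntropy_bool {W : Ω → Bool} (hW : Measurable W) :
    shannonEntropy μ W = Real.binEntropy ((μ (W ⁻¹' {true})).toReal) := by
  have h1 : (μ (W ⁻¹' {false})).toReal + (μ (W ⁻¹' {true})).toReal = 1 := by
    have := sum_prob_eq_one (μ := μ) hW
    rwa [Fintype.sum_bool, add_comm] at this
  rw [Real.binEntropy_eq_negMulLog_add_negMulLog_one_sub]
  unfold shannonEntropy
  rw [Fintype.sum_bool]
  have h2 : (μ (W ⁻¹' {false})).toReal = 1 - (μ (W ⁻¹' {true})).toReal := by linarith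
  rw [h2]

lemma shannonEntropy_pi_le {n : ℕ} {Z : Ω → (Fin n → Bool)} (hZ : Measurable Z) :
    shannonEntropy μ Z ≤ ∑ i, shannonEntropy μ (fun ω => Z ω i) := by
  induction n with
  | zero =>
    have h : ∀ x : Fin 0 → Bool, Z ⁻¹' {x} = Set.univ := by
      intro x
      ext ω
      simp only [Set.mem_preimage, Set.mem_singleton_iff, Set.mem_univ, iff_true]
      exact Subsingleton.elim _ _
    unfold shannonEntropy
    simp [h]
  | succ n ih =>
    set g : (Fin (n + 1) → Bool) → (Fin n → Bool) × Bool :=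
      fun f => (fun i => f i.castSucc, f (Fin.last n)) with hg
    have hginj : Function.Injective g := by
      intro f f' h
      rw [Prod.mk.injEq] at h
      funext i
      induction i using Fin.lastCases with
      | last => exact h.2
      | cast j => exact congrFun h.1 j
    have hfront : Measurable (fun ω => (fun i : Fin n => Z ω i.castSucc)) :=
      measurable_pi_lambda _ (fun i => (measurable_pi_apply _).comp hZ)
    have hlast : Measurable (fun ω => Z ω (Fin.last n)) :=
      (measurable_pi_apply _).comp hZ
    have heq : shannonEntropy μ Z = shannonEntropy μ (fun ω => g (Z ω)) :=
      (shannonEntropy_comp_inj μ hginj Z).symm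
    have hle : shannonEntropy μ (fun ω => g (Z ω)) ≤
        shannonEntropy μ (fun ω => (fun i : Fin n => Z ω i.castSucc)) +
        shannonEntropy μ (fun ω => Z ω (Fin.last n)) :=
      shannonEntropy_pair_le hfront hlast
    have hih := ih hfront
    rw [Fin.sum_univ_castSucc]
    calc shannonEntropy μ Z ≤
        shannonEntropy μ (fun ω => (fun i : Fin n => Z ω i.castSucc)) +
        shannonEntropy μ (fun ω => Z ω (Fin.last n)) := heq ▸ hle
    _ ≤ (∑ i : Fin n, shannonEntropy μ (fun ω => Z ω i.castSucc)) +
        shannonEntropy μ (fun ω => Z ω (Fin.last n)) := by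
        exact add_le_add_left hih _
    _ = _ := rfl

-- central binomial bound
lemma central_binom_lower : ∀ n : ℕ, 1 ≤ n →
    (4 : ℝ) ^ n ≤ 2 * Real.sqrt n * (Nat.centralBinom n : ℝ) := by
  intro n hn
  induction n with
  | zero => omega
  | succ m ih =>
    rcases Nat.eq_or_lt_of_le hn with h1 | h1
    · -- m + 1 = 1
      have : m = 0 := by omega
      subst this
      norm_num [Nat.centralBinom]
    · have hm : 1 ≤ m := by omega
      have ihm := ih hm
      have hrec : ((m : ℝ) + 1) * (Nat.centralBinom (m + 1) : ℝ) =
          2 * (2 * m + 1) * (Nat.centralBinom m : ℝ) := by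
        have := Nat.succ_mul_centralBinom_succ m
        exact_mod_cast congrArg (Nat.cast : ℕ → ℝ) this
      have hCpos : (0 : ℝ) < (Nat.centralBinom m : ℝ) := by
        exact_mod_cast Nat.centralBinom_pos m
      have hs : Real.sqrt m ^ 2 = (m : ℝ) := Real.sq_sqrt (by positivity)
      have ht : Real.sqrt (m + 1) ^ 2 = (m : ℝ) + 1 := by
        rw [show ((m : ℝ) + 1) = ((m + 1 : ℕ) : ℝ) by push_cast; ring] at *
        exact Real.sq_sqrt (by positivity)
      have hsnn : 0 ≤ Real.sqrt m := Real.sqrt_nonneg _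
      have htnn : 0 ≤ Real.sqrt (m + 1) := Real.sqrt_nonneg _
      -- key : 2 √m (m+1) ≤ (2m+1) √(m+1)
      have key : 2 * Real.sqrt m * ((m : ℝ) + 1) ≤ (2 * m + 1) * Real.sqrt (m + 1) := by
        have e1 : 2 * Real.sqrt m * ((m : ℝ) + 1) = Real.sqrt ((2 * ((m : ℝ) + 1)) ^ 2 * m) := by
          rw [Real.sqrt_mul (by positivity), Real.sqrt_sq (by positivity)]
          ring
        have e2 : (2 * (m : ℝ) + 1) * Real.sqrt ((m : ℝ) + 1)
            = Real.sqrt ((2 * (m : ℝ) + 1) ^ 2 * ((m : ℝ) + 1)) := by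
          rw [Real.sqrt_mul (by positivity), Real.sqrt_sq (by positivity)]
        rw [e1, e2]
        apply Real.sqrt_le_sqrt
        nlinarith
      -- final
      have hm1pos : (0 : ℝ) < (m : ℝ) + 1 := by positivity
      have h4 : (4 : ℝ) ^ (m + 1) = 4 * 4 ^ m := by ring
      have step1 : (4 : ℝ) ^ (m + 1) ≤ 4 * (2 * Real.sqrt m * (Nat.centralBinom m : ℝ)) := by
        rw [h4]; nlinarith [ihm]
      have step2 : 4 * (2 * Real.sqrt m * (Nat.centralBinom m : ℝ)) ≤
          2 * Real.sqrt (m + 1) * (Nat.centralBinom (m + 1) : ℝ) := by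
        have hmul := mul_le_mul_of_nonneg_right key (le_of_lt hCpos)
        -- 2√m(m+1) C ≤ (2m+1)√(m+1) C
        -- RHS: 2√(m+1) C' = 2√(m+1) * 2(2m+1)C/(m+1)
        rw [show (Nat.centralBinom (m + 1) : ℝ) =
            2 * (2 * m + 1) * (Nat.centralBinom m : ℝ) / ((m : ℝ) + 1) by
          field_simp; linarith [hrec]]
        rw [div_eq_inv_mul]
        have h5 : 2 * Real.sqrt (m + 1) * (((m : ℝ) + 1)⁻¹ *
            (2 * (2 * m + 1) * (Nat.centralBinom m : ℝ))) =
            (4 * ((2 * m + 1) * Real.sqrt (m + 1) * (Nat.centralBinom m : ℝ))) / ((m : ℝ) + 1) := by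
          field_simp; ring
        rw [h5, le_div_iff₀ hm1pos]
        nlinarith [hmul]
      push_cast at step1 step2 ⊢
      linarith

lemma entropy_uniform_half (K : ℕ) {X : Ω → (Fin K → Bool)}
    (hXunif : ∀ x : Fin K → Bool,
      μ (X ⁻¹' {x}) =
        if (univ.filter fun i => x i = true).card = K / 2
          then ((Nat.choose K (K / 2) : ENNReal))⁻¹ else 0) :
    shannonEntropy μ X = Real.log (Nat.choose K (K / 2)) := by
  classical
  set N : ℕ := Nat.choose K (K / 2) with hN
  have hNpos : 0 < N := Nat.choose_pos (Nat.div_le_self _ _)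
  have e : {x : Fin K → Bool // (univ.filter fun i => x i = true).card = K / 2} ≃
      {s : Finset (Fin K) // s.card = K / 2} :=
    { toFun := fun x => ⟨univ.filter fun i => x.1 i = true, x.2⟩
      invFun := fun s => ⟨fun i => decide (i ∈ s.1), by
        have h : (univ.filter fun i => decide (i ∈ s.1) = true) = s.1 := by
          ext i; simp
        rw [h]; exact s.2⟩
      left_inv := fun x => by
        apply Subtype.ext
        funext i
        simp
      right_inv := fun s => by
        apply Subtype.ext
        ext i
        simp }
  have hcard : (univ.filter fun x : Fin K → Bool =>
      (univ.filter fun i => x i = true).card = K / 2).card = N := by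
    rw [← Fintype.card_subtype, Fintype.card_congr e, Fintype.card_finset_len,
      Fintype.card_fin]
  have hterm : ∀ x : Fin K → Bool, Real.negMulLog ((μ (X ⁻¹' {x})).toReal) =
      if (univ.filter fun i => x i = true).card = K / 2
        then ((N : ℝ))⁻¹ * Real.log N else 0 := by
    intro x
    rw [hXunif x]
    split
    · rw [show (((N : ENNReal))⁻¹).toReal = ((N : ℝ))⁻¹ by
        rw [ENNReal.toReal_inv]; simp]
      rw [Real.negMulLog, Real.log_inv]; ring
    · simp
  unfold shannonEntropy
  rw [Finset.sum_congr rfl (fun x _ => hterm x), ← Finset.sum_filter,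
    Finset.sum_const, hcard, nsmul_eq_mul, ← mul_assoc,
    mul_inv_cancel₀ (by exact_mod_cast hNpos.ne'), one_mul]

lemma log_choose_ge (K : ℕ) (hK : 2 ≤ K) (hKeven : Even K) :
    (K : ℝ) * Real.log 2 - (1 / 2) * Real.log (2 * K) ≤ Real.log (Nat.choose K (K / 2)) := by
  obtain ⟨n, hn⟩ := hKeven
  have hK2 : K = 2 * n := by omega
  have hn1 : 1 ≤ n := by omega
  have hdiv : K / 2 = n := by omega
  have hC : Nat.choose K (K / 2) = Nat.centralBinom n := by
    rw [hdiv, hK2, Nat.centralBinom]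
  have hb := central_binom_lower n hn1
  have hCpos : (0 : ℝ) < (Nat.centralBinom n : ℝ) := by exact_mod_cast Nat.centralBinom_pos n
  have hnpos : (0 : ℝ) < (n : ℝ) := by exact_mod_cast hn1
  have h2K : (2 * (K : ℝ)) = 4 * n := by rw [hK2]; push_cast; ring
  have hsqrt : Real.sqrt (2 * K) = 2 * Real.sqrt n := by
    rw [h2K, show (4 : ℝ) * n = 2 ^ 2 * n by ring, Real.sqrt_mul (by positivity),
      Real.sqrt_sq (by norm_num)]
  have hpow : (2 : ℝ) ^ K = 4 ^ n := by rw [hK2, pow_mul]; norm_num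
  have hsn : (0 : ℝ) < Real.sqrt n := Real.sqrt_pos.2 hnpos
  have hmain : (2 : ℝ) ^ K / Real.sqrt (2 * K) ≤ (Nat.centralBinom n : ℝ) := by
    rw [hpow, hsqrt, div_le_iff₀ (by positivity)]
    nlinarith [hb]
  have hlog := Real.log_le_log (by positivity) hmain
  rw [Real.log_div (by positivity) (by positivity), Real.log_pow,
    Real.log_sqrt (by positivity)] at hlog
  rw [hC]
  push_cast at hlog ⊢
  linarith


end Aux

/-- Fano-type inequality. -/
theorem stmt15_fano_uniform_subset {Ω : Type*} [MeasurableSpace Ω]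
    (μ : Measure Ω) [IsProbabilityMeasure μ]
    (K : ℕ) (hK : 2 ≤ K) (hKeven : Even K)
    (X Y : Ω → (Fin K → Bool))
    (hXmeas : Measurable X) (hYmeas : Measurable Y)
    (hXunif : ∀ x : Fin K → Bool,
      μ (X ⁻¹' {x}) =
        if (univ.filter fun i => x i = true).card = K / 2
          then ((Nat.choose K (K / 2) : ENNReal))⁻¹ else 0)
    (δ : ℝ) (hδ : δ ∈ Set.Icc (0 : ℝ) (1 / 2))
    (herr : (1 / (K : ℝ)) * ∑ i : Fin K, (μ {ω | X ω i ≠ Y ω i}).toReal ≤ δ) :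
    (K : ℝ) * (Real.log 2 - Real.binEntropy δ) - (1 / 2) * Real.log (2 * K) ≤
      mutualInfo μ X Y := by
  classical
  have hKpos : (0 : ℝ) < (K : ℝ) := by exact_mod_cast (by omega : 0 < K)
  -- the xor variable
  set Z : Ω → (Fin K → Bool) := fun ω => fun i => (X ω i != Y ω i) with hZdef
  have hZmeas : Measurable Z := measurable_pi_lambda _ (fun i =>
    (measurable_of_countable (fun p : Bool × Bool => p.1 != p.2)).comp
      (((measurable_pi_apply i).comp hXmeas).prodMk ((measurable_pi_apply i).comp hYmeas)))
  -- bijection (x, y) ↦ (y, x xor y)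
  set f : ((Fin K → Bool) × (Fin K → Bool)) → ((Fin K → Bool) × (Fin K → Bool)) :=
    fun c => (c.2, fun i => c.1 i != c.2 i) with hf
  have hfinj : Function.Injective f := by
    intro c d h
    rw [hf, Prod.mk.injEq] at h
    obtain ⟨h1, h2⟩ := h
    refine Prod.ext ?_ h1
    funext i
    have h3 := congrFun h2 i
    have h4 := congrFun h1 i
    revert h3
    rw [h4]
    cases d.2 i <;> cases c.1 i <;> cases d.1 i <;> simp
  have hYZ : shannonEntropy μ (fun ω => (Y ω, Z ω)) = shannonEntropy μ (fun ω => (X ω, Y ω)) :=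
    shannonEntropy_comp_inj μ hfinj (fun ω => (X ω, Y ω))
  have hsub1 : shannonEntropy μ (fun ω => (Y ω, Z ω)) ≤
      shannonEntropy μ Y + shannonEntropy μ Z := shannonEntropy_pair_le hYmeas hZmeas
  have hsub2 : shannonEntropy μ Z ≤ ∑ i, shannonEntropy μ (fun ω => Z ω i) :=
    shannonEntropy_pi_le hZmeas
  set pe : Fin K → ℝ := fun i => (μ {ω | X ω i ≠ Y ω i}).toReal with hpe
  have hZi : ∀ i, shannonEntropy μ (fun ω => Z ω i) = Real.binEntropy (pe i) := by
    intro i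
    have hWm : Measurable (fun ω => Z ω i) := (measurable_pi_apply i).comp hZmeas
    rw [shannonEntropy_bool hWm]
    have hset : (fun ω => Z ω i) ⁻¹' {true} = {ω | X ω i ≠ Y ω i} := by
      ext ω
      simp [hZdef, bne_iff_ne]
    rw [hset]
  have hpe0 : ∀ i, 0 ≤ pe i := fun i => ENNReal.toReal_nonneg
  have hpe1 : ∀ i, pe i ≤ 1 := by
    intro i
    rw [hpe]
    calc (μ {ω | X ω i ≠ Y ω i}).toReal ≤ (μ Set.univ).toReal :=
        ENNReal.toReal_mono (measure_ne_top μ _) (measure_mono (Set.subset_univ _))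
    _ = 1 := by simp
  -- Jensen
  have hJ : ∑ i, (1 / (K : ℝ)) • Real.binEntropy (pe i) ≤
      Real.binEntropy (∑ i, (1 / (K : ℝ)) • pe i) := by
    apply (Real.strictConcave_binEntropy.concaveOn).le_map_sum
    · intro i _; positivity
    · rw [Finset.sum_const, Finset.card_univ, Fintype.card_fin, nsmul_eq_mul]
      field_simp
    · intro i _; exact ⟨hpe0 i, hpe1 i⟩
  have hmean : ∑ i, (1 / (K : ℝ)) • pe i = (1 / (K : ℝ)) * ∑ i, pe i := by
    simp only [smul_eq_mul, Finset.mul_sum]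
  have hmeanmem : (∑ i, (1 / (K : ℝ)) • pe i) ∈ Set.Icc (0 : ℝ) 2⁻¹ := by
    constructor
    · rw [hmean]
      have : 0 ≤ ∑ i, pe i := Finset.sum_nonneg fun i _ => hpe0 i
      positivity
    · rw [hmean]
      calc (1 / (K : ℝ)) * ∑ i, pe i ≤ δ := herr
      _ ≤ 2⁻¹ := by rw [show (2 : ℝ)⁻¹ = 1 / 2 by norm_num]; exact hδ.2
  have hδmem : δ ∈ Set.Icc (0 : ℝ) 2⁻¹ := by
    refine ⟨hδ.1, ?_⟩
    rw [show (2 : ℝ)⁻¹ = 1 / 2 by norm_num]; exact hδ.2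
  have hmono : Real.binEntropy (∑ i, (1 / (K : ℝ)) • pe i) ≤ Real.binEntropy δ := by
    apply Real.binEntropy_strictMonoOn.monotoneOn hmeanmem hδmem
    rw [hmean]; exact herr
  have hsumbe : ∑ i, Real.binEntropy (pe i) ≤ (K : ℝ) * Real.binEntropy δ := by
    have h1 : ∑ i, (1 / (K : ℝ)) • Real.binEntropy (pe i) =
        (1 / (K : ℝ)) * ∑ i, Real.binEntropy (pe i) := by
      simp only [smul_eq_mul, Finset.mul_sum]
    have h2 : (1 / (K : ℝ)) * ∑ i, Real.binEntropy (pe i) ≤ Real.binEntropy δ := by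
      rw [← h1]; exact hJ.trans hmono
    have h3 := mul_le_mul_of_nonneg_left h2 hKpos.le
    rw [← mul_assoc, mul_one_div, div_self hKpos.ne', one_mul] at h3
    exact h3
  -- entropy of X
  have hHX : shannonEntropy μ X = Real.log (Nat.choose K (K / 2)) :=
    entropy_uniform_half K hXunif
  have hHXge : (K : ℝ) * Real.log 2 - (1 / 2) * Real.log (2 * K) ≤ shannonEntropy μ X := by
    rw [hHX]; exact log_choose_ge K hK hKeven
  -- assemble
  have hZsum : shannonEntropy μ Z ≤ (K : ℝ) * Real.binEntropy δ := by
    calc shannonEntropy μ Z ≤ ∑ i, shannonEntropy μ (fun ω => Z ω i) := hsub2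
    _ = ∑ i, Real.binEntropy (pe i) := Finset.sum_congr rfl fun i _ => hZi i
    _ ≤ (K : ℝ) * Real.binEntropy δ := hsumbe
  unfold mutualInfo
  have : shannonEntropy μ (fun ω => (X ω, Y ω)) ≤
      shannonEntropy μ Y + (K : ℝ) * Real.binEntropy δ := by
    rw [← hYZ]
    linarith
  linarith
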